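/- Let L be a finite-dimensional Lie algebra over a field K and let f : L → L be a normal Lie algebra endomorphism, i.e. f([X,Y]) = [f(X),Y] for all X, Y ∈ L. Then there exists N ≥ 1 such that L = Ker(f^N) ⊕ f^N(L), a direct sum of Lie ideals of L. -/

import Mathlib

/-- **Fitting lemma for normal endomorphisms.** If `f` is a normal endomorphism
(`f ⁅X, Y⁆ = ⁅f X, Y⁆`) of a finite-dimensional Lie algebra `L`, then there is `N ≥ 1` such
that `L = Ker (f ^ N) ⊕ Im (f ^ N)`, a direct sum of Lie ideals. -/
theorem stmt2 {K L : Type*} [Field K] [LieRing L] [LieAlgebra K L]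
    [FiniteDimensional K L]
    (f : L →ₗ⁅K⁆ L) (hf : ∀ X Y : L, f ⁅X, Y⁆ = ⁅f X, Y⁆) :
    ∃ N : ℕ, 1 ≤ N ∧ ∃ I J : LieIdeal K L,
      (I : Submodule K L) = LinearMap.ker ((f : L →ₗ[K] L) ^ N) ∧
      (J : Submodule K L) = LinearMap.range ((f : L →ₗ[K] L) ^ N) ∧
      I ⊓ J = ⊥ ∧ I ⊔ J = ⊤ := by
  obtain ⟨n, hn⟩ := Filter.eventually_atTop.mp
    (LinearMap.eventually_isCompl_ker_pow_range_pow (f : L →ₗ[K] L))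
  set N := max n 1 with hN
  have hcompl := hn N (le_max_left n 1)
  have hfN : ∀ X Y : L, ((f : L →ₗ[K] L) ^ N) ⁅X, Y⁆ = ⁅((f : L →ₗ[K] L) ^ N) X, Y⁆ := by
    intro X Y
    induction N with
    | zero => simp
    | succ k ih =>
        rw [pow_succ', Module.End.mul_apply, ih]
        exact hf _ _
  refine ⟨N, le_max_right n 1,
    ⟨LinearMap.ker ((f : L →ₗ[K] L) ^ N), ?_⟩,
    ⟨LinearMap.range ((f : L →ₗ[K] L) ^ N), ?_⟩, rfl, rfl, ?_, ?_⟩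
  · intro x y hy
    simp only [Submodule.mem_carrier, SetLike.mem_coe, LinearMap.mem_ker] at hy ⊢
    rw [← lie_skew, map_neg, hfN, hy, zero_lie, neg_zero]
  · rintro x y ⟨z, rfl⟩
    simp only [Submodule.mem_carrier, SetLike.mem_coe, LinearMap.mem_range]
    exact ⟨-⁅z, x⁆, by rw [map_neg, hfN, lie_skew]⟩
  · rw [← LieSubmodule.toSubmodule_inj]
    simpa using hcompl.1.eq_bot
  · rw [← LieSubmodule.toSubmodule_inj]
    simpa using hcompl.2.eq_top
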